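/- Let y ∈ V^n be a probability vector with positive components, let λ ∈ (0,1), let 0 < d < n−1, and let k be a positive integer. Then for every x ∈ K_d^λ(y): x^{⊗k} ◁^w λ^k y^{⊗k} if and only if y_{d+1}^k > y_n^{k−1} y_d. -/

import Mathlib

noncomputable section

/-- `eSum x l` : the sum of the `l` largest components of `x`. -/
def eSum {n : ℕ} (x : Fin n → ℝ) (l : ℕ) : ℝ :=
  sSup {r | ∃ s : Finset (Fin n), s.card = l ∧ r = ∑ i ∈ s, x i}

/-- `ESum x l` : the sum of the `l` smallest components of `x`. -/
def ESum {n : ℕ} (x : Fin n → ℝ) (l : ℕ) : ℝ :=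
  sInf {r | ∃ s : Finset (Fin n), s.card = l ∧ r = ∑ i ∈ s, x i}

/-- Majorization `x ≺ y` (for vectors with equal total sum):
`e_l(x) ≤ e_l(y)` for all `1 ≤ l ≤ n`. -/
def Maj {n : ℕ} (x y : Fin n → ℝ) : Prop :=
  (∑ i, x i) = (∑ i, y i) ∧ ∀ l : ℕ, 1 ≤ l → l ≤ n → eSum x l ≤ eSum y l

/-- Strict majorization `x ◁ y`: equal total sums and `e_l(x) < e_l(y)` for all
`1 ≤ l ≤ n - 1`. -/
def SMaj {n : ℕ} (x y : Fin n → ℝ) : Prop :=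
  (∑ i, x i) = (∑ i, y i) ∧ ∀ l : ℕ, 1 ≤ l → l + 1 ≤ n → eSum x l < eSum y l

/-- Super-majorization `x ≺ʷ y` : `E_l(x) ≥ E_l(y)` for all `1 ≤ l ≤ n`. -/
def SupMaj {n : ℕ} (x y : Fin n → ℝ) : Prop :=
  ∀ l : ℕ, 1 ≤ l → l ≤ n → ESum y l ≤ ESum x l

/-- Strict super-majorization `x ◁ʷ y` : `E_l(x) > E_l(y)` for all `1 ≤ l ≤ n`. -/
def SSupMaj {n : ℕ} (x y : Fin n → ℝ) : Prop :=
  ∀ l : ℕ, 1 ≤ l → l ≤ n → ESum y l < ESum x l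

/-- Tensor product of two vectors: the vector of all pairwise products. -/
def tensor {m k : ℕ} (x : Fin m → ℝ) (c : Fin k → ℝ) : Fin (m * k) → ℝ :=
  fun i => x (finProdFinEquiv.symm i).1 * c (finProdFinEquiv.symm i).2

/-- `k`-fold tensor power of a vector. -/
def tpow {n : ℕ} (x : Fin n → ℝ) (k : ℕ) : Fin (n ^ k) → ℝ :=
  fun i => ∏ j : Fin k, x (finFunctionFinEquiv.symm i j)

/-- `V^n` : probability vectors with components in non-increasing order. -/
def Vn (n : ℕ) : Set (Fin n → ℝ) :=
  {x | (∀ i, 0 ≤ x i) ∧ (∑ i, x i) = 1 ∧ Antitone x}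

/-- `S(y)` : members of `V^n` majorized by `y`. -/
def Sset {n : ℕ} (y : Fin n → ℝ) : Set (Fin n → ℝ) :=
  {x ∈ Vn n | Maj x y}

/-- `T(y,c)` : members of `V^n` with `x ⊗ c ≺ y ⊗ c`. -/
def Tcat {n k : ℕ} (y : Fin n → ℝ) (c : Fin k → ℝ) : Set (Fin n → ℝ) :=
  {x ∈ Vn n | Maj (tensor x c) (tensor y c)}

/-- Local uniformity `l_u(c)` : the minimum of the consecutive ratios `c_{i+1}/c_i`. -/
def lu {k : ℕ} (c : Fin k → ℝ) : ℝ :=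
  sInf {r | ∃ i : ℕ, ∃ h : i + 1 < k, r = c ⟨i + 1, h⟩ / c ⟨i, Nat.lt_of_succ_lt h⟩}

/-- Global uniformity `g_u(c) = c_k / c_1` (smallest over largest component of a
non-increasingly ordered vector). -/
def gu {k : ℕ} (c : Fin k → ℝ) : ℝ :=
  if h : 0 < k then c ⟨k - 1, Nat.sub_lt h Nat.one_pos⟩ / c ⟨0, h⟩ else 1

/-- Largest component. -/
def maxc {n : ℕ} (x : Fin n → ℝ) : ℝ := sSup (Set.range x)

/-- Smallest component. -/
def minc {n : ℕ} (x : Fin n → ℝ) : ℝ := sInf (Set.range x)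

/-- `c'` is a (contiguous) segment of `c`. -/
def IsSegment {j k : ℕ} (c' : Fin j → ℝ) (c : Fin k → ℝ) : Prop :=
  ∃ (i : ℕ) (_h : i + j ≤ k), ∀ t : Fin j, c' t = c ⟨i + t, by have := t.isLt; omega⟩

/-- The first `d` components of a vector. -/
def take {n : ℕ} (x : Fin n → ℝ) (d : ℕ) (h : d ≤ n) : Fin d → ℝ :=
  fun i => x ⟨i, Nat.lt_of_lt_of_le i.isLt h⟩

/-- The components of a vector after the first `d` ones. -/
def drop {n : ℕ} (x : Fin n → ℝ) (d : ℕ) : Fin (n - d) → ℝ :=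
  fun i => x ⟨d + i, by have := i.isLt; omega⟩

/-- The segment `(c_i, …, c_j)` of `c` (`0`-based indices). -/
def seg {k : ℕ} (c : Fin k → ℝ) (i j : ℕ) (hij : i ≤ j) (hj : j < k) :
    Fin (j - i + 1) → ℝ :=
  fun t => c ⟨i + t, by have := t.isLt; omega⟩

/-- `(c_i, …, c_j)` is a block of the decomposition `[c]_α` of the (positive,
non-increasingly ordered) vector `c` according to `α`: ratios within the block
exceed `α`, and the ratios at the two boundaries of the block are `≤ α`
(or the block touches an end of `c`). -/
def IsBlock {k : ℕ} (α : ℝ) (c : Fin k → ℝ) (i j : ℕ) : Prop :=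
  ∃ (hij : i ≤ j) (hj : j < k),
    (i = 0 ∨ c ⟨i, by omega⟩ / c ⟨i - 1, by omega⟩ ≤ α) ∧
    (j = k - 1 ∨ ∃ hj1 : j + 1 < k, c ⟨j + 1, hj1⟩ / c ⟨j, hj⟩ ≤ α) ∧
    (∀ (t : ℕ) (ht1 : i ≤ t) (ht2 : t < j), α < c ⟨t + 1, by omega⟩ / c ⟨t, by omega⟩)

/-- `T_k(y)` : states transformable to `y` with a `k`-dimensional catalyst. -/
def Tk {n : ℕ} (k : ℕ) (y : Fin n → ℝ) : Set (Fin n → ℝ) :=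
  {x ∈ Vn n | ∃ c : Fin k → ℝ, (∀ i, 0 < c i) ∧ (∑ i, c i) = 1 ∧ Antitone c ∧
    Maj (tensor x c) (tensor y c)}

/-- `M_k(y)` : states `x` with `x^{⊗k} ≺ y^{⊗k}`. -/
def Mk {n : ℕ} (k : ℕ) (y : Fin n → ℝ) : Set (Fin n → ℝ) :=
  {x ∈ Vn n | Maj (tpow x k) (tpow y k)}

/-- `T(y)` : states transformable to `y` with some catalyst. -/
def Tinf {n : ℕ} (y : Fin n → ℝ) : Set (Fin n → ℝ) :=
  {x ∈ Vn n | ∃ (k : ℕ) (c : Fin k → ℝ), 0 < k ∧ (∀ i, 0 < c i) ∧ (∑ i, c i) = 1 ∧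
    Antitone c ∧ Maj (tensor x c) (tensor y c)}

/-- `M(y)` : states `x` with `x^{⊗k} ≺ y^{⊗k}` for some `k ≥ 1`. -/
def Minf {n : ℕ} (y : Fin n → ℝ) : Set (Fin n → ℝ) :=
  {x ∈ Vn n | ∃ k : ℕ, 1 ≤ k ∧ Maj (tpow x k) (tpow y k)}

/-- `S^λ(y)` : states `x` with `x ≺ʷ λ y`. -/
def Slam {n : ℕ} (lam : ℝ) (y : Fin n → ℝ) : Set (Fin n → ℝ) :=
  {x ∈ Vn n | SupMaj x (fun i => lam * y i)}

/-- `T^λ(y,c)` : states `x` with `x ⊗ c ≺ʷ λ (y ⊗ c)`. -/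
def Tlamc {n k : ℕ} (lam : ℝ) (y : Fin n → ℝ) (c : Fin k → ℝ) : Set (Fin n → ℝ) :=
  {x ∈ Vn n | SupMaj (tensor x c) (fun i => lam * tensor y c i)}

/-- `T_k^λ(y)`. -/
def Tklam {n : ℕ} (k : ℕ) (lam : ℝ) (y : Fin n → ℝ) : Set (Fin n → ℝ) :=
  {x ∈ Vn n | ∃ c : Fin k → ℝ, (∀ i, 0 < c i) ∧ (∑ i, c i) = 1 ∧ Antitone c ∧
    SupMaj (tensor x c) (fun i => lam * tensor y c i)}

/-- `M_k^λ(y)`. -/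
def Mklam {n : ℕ} (k : ℕ) (lam : ℝ) (y : Fin n → ℝ) : Set (Fin n → ℝ) :=
  {x ∈ Vn n | SupMaj (tpow x k) (fun i => lam ^ k * tpow y k i)}

/-- `T^λ(y)`. -/
def Tlaminf {n : ℕ} (lam : ℝ) (y : Fin n → ℝ) : Set (Fin n → ℝ) :=
  {x ∈ Vn n | ∃ (k : ℕ) (c : Fin k → ℝ), 0 < k ∧ (∀ i, 0 < c i) ∧ (∑ i, c i) = 1 ∧
    Antitone c ∧ SupMaj (tensor x c) (fun i => lam * tensor y c i)}

/-- `M^λ(y)`. -/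
def Mlaminf {n : ℕ} (lam : ℝ) (y : Fin n → ℝ) : Set (Fin n → ℝ) :=
  {x ∈ Vn n | ∃ k : ℕ, 1 ≤ k ∧ SupMaj (tpow x k) (fun i => lam ^ k * tpow y k i)}

/-- `K_d(y)` : concatenations `x = x' ⊕ x''` with `x' ◁ y'` and `x'' ◁ y''`,
where `y'` is the first-`d` part of `y` and `y''` the rest. -/
def Kd {n : ℕ} (y : Fin n → ℝ) (d : ℕ) (h : d ≤ n) : Set (Fin n → ℝ) :=
  {x ∈ Vn n | SMaj (take x d h) (take y d h) ∧ SMaj (drop x d) (drop y d)}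

/-- `y(d)` : first `d` components equal to `e_d(y)/d`, the last `n-d` equal to
`(1 - e_d(y))/(n-d)`. -/
def yvec {n : ℕ} (y : Fin n → ℝ) (d : ℕ) : Fin n → ℝ :=
  fun i => if (i : ℕ) < d then eSum y d / d else (1 - eSum y d) / (n - d)

/-- `K_d^λ(y)` : states `x ∈ S^λ(y)` with `E_l(x) = λ E_l(y)` iff `l = n - d`. -/
def Kdlam {n : ℕ} (lam : ℝ) (y : Fin n → ℝ) (d : ℕ) : Set (Fin n → ℝ) :=
  {x ∈ Vn n | SupMaj x (fun i => lam * y i) ∧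
    ∀ l : ℕ, 1 ≤ l → l ≤ n → (ESum x l = lam * ESum y l ↔ l = n - d)}

namespace Stmt19Aux

open Finset

/-! ### Part A : basic facts about `ESum` -/

def esumSet {n : ℕ} (v : Fin n → ℝ) (l : ℕ) : Set ℝ :=
  {r | ∃ s : Finset (Fin n), s.card = l ∧ r = ∑ i ∈ s, v i}

lemma esumSet_finite {n : ℕ} (v : Fin n → ℝ) (l : ℕ) : (esumSet v l).Finite := by
  have : esumSet v l ⊆ (fun s : Finset (Fin n) => ∑ i ∈ s, v i) '' Set.univ := by
    rintro r ⟨s, _, rfl⟩; exact ⟨s, trivial, rfl⟩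
  exact Set.Finite.subset (Set.Finite.image _ (Set.finite_univ)) this

lemma esumSet_nonempty {n : ℕ} (v : Fin n → ℝ) {l : ℕ} (hl : l ≤ n) :
    (esumSet v l).Nonempty := by
  obtain ⟨s, _, hcard⟩ := Finset.exists_subset_card_eq (by simpa using hl :
    l ≤ (Finset.univ : Finset (Fin n)).card)
  exact ⟨∑ i ∈ s, v i, s, hcard, rfl⟩

lemma ESum_le_sum {n : ℕ} (v : Fin n → ℝ) {l : ℕ} (s : Finset (Fin n))
    (hs : s.card = l) : ESum v l ≤ ∑ i ∈ s, v i := by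
  have hb : BddBelow (esumSet v l) := (esumSet_finite v l).bddBelow
  exact csInf_le hb ⟨s, hs, rfl⟩

lemma exists_ESum_eq {n : ℕ} (v : Fin n → ℝ) {l : ℕ} (hl : l ≤ n) :
    ∃ s : Finset (Fin n), s.card = l ∧ ESum v l = ∑ i ∈ s, v i :=
  (esumSet_nonempty v hl).csInf_mem (esumSet_finite v l)

lemma ESum_smul {n : ℕ} (v : Fin n → ℝ) {l : ℕ} (hl : l ≤ n) {c : ℝ} (hc : 0 ≤ c) :
    ESum (fun i => c * v i) l = c * ESum v l := by
  obtain ⟨s0, hs0, h0⟩ := exists_ESum_eq v hl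
  obtain ⟨s1, hs1, h1⟩ := exists_ESum_eq (fun i => c * v i) hl
  have h2 : ESum (fun i => c * v i) l ≤ c * ESum v l := by
    calc ESum (fun i => c * v i) l ≤ ∑ i ∈ s0, c * v i := ESum_le_sum _ s0 hs0
    _ = c * ∑ i ∈ s0, v i := by rw [Finset.mul_sum]
    _ = c * ESum v l := by rw [h0]
  have h3 : c * ESum v l ≤ ESum (fun i => c * v i) l := by
    have := ESum_le_sum v s1 hs1
    calc c * ESum v l ≤ c * ∑ i ∈ s1, v i := by
          exact mul_le_mul_of_nonneg_left this hc
    _ = ∑ i ∈ s1, c * v i := by rw [Finset.mul_sum]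
    _ = ESum (fun i => c * v i) l := h1.symm
  linarith

/-- For a strictly monotone map `Fin l → Fin n`, `f a + c ≤ f (a+c)`. -/
lemma strictMono_add_le {l n : ℕ} {f : Fin l → Fin n} (hf : StrictMono f) :
    ∀ (c a : ℕ) (h : a + c < l), (f ⟨a, by omega⟩ : ℕ) + c ≤ (f ⟨a + c, h⟩ : ℕ) := by
  intro c
  induction c with
  | zero => intro a h; simp
  | succ c ih =>
    intro a h
    have h1 : a + c < l := by omega
    have h2 := ih a h1
    have h3 : (f ⟨a + c, h1⟩ : ℕ) < (f ⟨a + c + 1, by omega⟩ : ℕ) := by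
      exact hf (Fin.mk_lt_mk.mpr (by omega))
    have h4 : (⟨a + (c+1), h⟩ : Fin l) = ⟨a + c + 1, by omega⟩ := rfl
    rw [h4]; omega

/-- `tailSet n l` : the set of the `l` last indices of `Fin n`. -/
def tailSet (n l : ℕ) : Finset (Fin n) := Finset.univ.filter (fun i => n - l ≤ (i : ℕ))

lemma card_filter_le_val {n a : ℕ} (ha : a ≤ n) :
    (Finset.univ.filter (fun i : Fin n => a ≤ (i : ℕ))).card = n - a := by
  have himg : (Finset.univ.filter (fun i : Fin n => a ≤ (i : ℕ))).image (fun i : Fin n => (i : ℕ))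
      = Finset.Ico a n := by
    ext t
    simp only [Finset.mem_image, Finset.mem_filter, Finset.mem_univ, true_and, Finset.mem_Ico]
    constructor
    · rintro ⟨i, hi, rfl⟩; exact ⟨hi, i.isLt⟩
    · rintro ⟨h1, h2⟩; exact ⟨⟨t, h2⟩, h1, rfl⟩
  have hinj : Set.InjOn (fun i : Fin n => (i : ℕ))
      (Finset.univ.filter (fun i : Fin n => a ≤ (i : ℕ))) := by
    intro i _ j _ h; exact Fin.ext h
  rw [← Finset.card_image_of_injOn hinj, himg, Nat.card_Ico]

lemma card_tailSet {n l : ℕ} (hl : l ≤ n) : (tailSet n l).card = l := by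
  rw [tailSet, card_filter_le_val (by omega)]; omega

lemma sum_tailSet_le {n : ℕ} {v : Fin n → ℝ} (hv : Antitone v) {l : ℕ} (hl : l ≤ n)
    (s : Finset (Fin n)) (hs : s.card = l) :
    ∑ i ∈ tailSet n l, v i ≤ ∑ i ∈ s, v i := by
  rcases Nat.eq_zero_or_pos l with rfl | hlpos
  · rw [Finset.card_eq_zero] at hs
    subst hs
    have : tailSet n 0 = ∅ := by
      apply Finset.eq_empty_of_forall_notMem
      intro i hi
      simp only [tailSet, Finset.mem_filter] at hi
      have := i.isLt; omega
    simp [this]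
  · -- enumerate s and the tail set
    have hmono := (s.orderIsoOfFin hs).strictMono
    set f : Fin l → Fin n := fun j => ((s.orderIsoOfFin hs) j : Fin n) with hf
    have hfs : StrictMono f := by
      intro a b hab
      exact hmono hab
    have hmem : ∀ j, f j ∈ s := fun j => ((s.orderIsoOfFin hs) j).2
    have hrange : s = Finset.univ.image f := by
      apply Finset.eq_of_subset_of_card_le
      · intro i hi
        obtain ⟨j, hj⟩ := (s.orderIsoOfFin hs).surjective ⟨i, hi⟩
        refine Finset.mem_image.2 ⟨j, Finset.mem_univ _, ?_⟩
        simpa [hf] using congrArg Subtype.val hj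
      · calc (Finset.univ.image f).card ≤ Finset.univ.card := Finset.card_image_le
        _ = l := by simp
        _ = s.card := hs.symm
    have hfinj : Function.Injective f := hfs.injective
    have hsum_s : ∑ i ∈ s, v i = ∑ j : Fin l, v (f j) := by
      rw [hrange, Finset.sum_image (fun a _ b _ h => hfinj h)]
    -- similarly enumerate tailSet by g j = n - l + j
    have hg : ∀ j : Fin l, n - l + (j : ℕ) < n := fun j => by have := j.isLt; omega
    have htail : tailSet n l = Finset.univ.image (fun j : Fin l => (⟨n - l + j, hg j⟩ : Fin n)) := by
      ext i
      simp only [tailSet, Finset.mem_filter, Finset.mem_univ, true_and, Finset.mem_image]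
      constructor
      · intro hi
        have hj : (i : ℕ) - (n - l) < l := by have := i.isLt; omega
        exact ⟨⟨(i : ℕ) - (n - l), hj⟩, by apply Fin.ext; simp; omega⟩
      · rintro ⟨j, rfl⟩; simp
    have hginj : Function.Injective (fun j : Fin l => (⟨n - l + j, hg j⟩ : Fin n)) := by
      intro a b h
      apply Fin.ext
      have := Fin.mk.injEq (n - l + (a:ℕ)) (hg a) (n - l + (b:ℕ)) (hg b) ▸ h
      simp only [Fin.mk.injEq] at h
      omega
    have hsum_t : ∑ i ∈ tailSet n l, v i = ∑ j : Fin l, v ⟨n - l + j, hg j⟩ := by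
      rw [htail, Finset.sum_image (fun a _ b _ h => hginj h)]
    rw [hsum_s, hsum_t]
    apply Finset.sum_le_sum
    intro j _
    apply hv
    -- f j ≤ n - l + j
    have hlast : (f ⟨(j:ℕ) + (l - 1 - (j:ℕ)), by have := j.isLt; omega⟩ : ℕ) ≤ n - 1 := by
      have := (f ⟨(j:ℕ) + (l - 1 - (j:ℕ)), by have := j.isLt; omega⟩).isLt; omega
    have := strictMono_add_le hfs (l - 1 - (j:ℕ)) (j : ℕ) (by have := j.isLt; omega)
    simp only [Fin.eta] at this
    rw [Fin.le_def]
    simp only [Fin.val_mk]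
    omega

lemma ESum_antitone {n : ℕ} {v : Fin n → ℝ} (hv : Antitone v) {l : ℕ} (hl : l ≤ n) :
    ESum v l = ∑ i ∈ tailSet n l, v i := by
  apply le_antisymm
  · exact ESum_le_sum v _ (card_tailSet hl)
  · obtain ⟨s, hs, heq⟩ := exists_ESum_eq v hl
    rw [heq]
    exact sum_tailSet_le hv hl s hs


/-! ### Part B : tail sums and Abel summation -/

/-- Extension of a vector on `Fin n` to `ℕ` by zero. -/
def ve {n : ℕ} (v : Fin n → ℝ) : ℕ → ℝ := fun t => if h : t < n then v ⟨t, h⟩ else 0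

/-- `TS v t` : sum of the components of `v` with index `≥ t`. -/
def TS {n : ℕ} (v : Fin n → ℝ) (t : ℕ) : ℝ := ∑ i ∈ Finset.Ico t n, ve v i

lemma TS_eq_sum_filter {n : ℕ} (v : Fin n → ℝ) (t : ℕ) :
    TS v t = ∑ i ∈ Finset.univ.filter (fun i : Fin n => t ≤ (i : ℕ)), v i := by
  rw [TS]
  rw [show Finset.Ico t n =
      (Finset.univ.filter (fun i : Fin n => t ≤ (i : ℕ))).image (fun i : Fin n => (i : ℕ)) by
    ext u
    simp only [Finset.mem_image, Finset.mem_filter, Finset.mem_univ, true_and, Finset.mem_Ico]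
    constructor
    · rintro ⟨h1, h2⟩; exact ⟨⟨u, h2⟩, h1, rfl⟩
    · rintro ⟨i, hi, rfl⟩; exact ⟨hi, i.isLt⟩]
  rw [Finset.sum_image (fun a _ b _ h => Fin.ext h)]
  apply Finset.sum_congr rfl
  intro i _
  simp [ve]

lemma ESum_eq_TS {n : ℕ} {v : Fin n → ℝ} (hv : Antitone v) {t : ℕ} (ht : t ≤ n) :
    ESum v (n - t) = TS v t := by
  rw [ESum_antitone hv (by omega : n - t ≤ n), TS_eq_sum_filter, tailSet]
  have h : n - (n - t) = t := by omega
  rw [h]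

lemma TS_nonneg {n : ℕ} {v : Fin n → ℝ} (hv : ∀ i, 0 ≤ v i) (t : ℕ) : 0 ≤ TS v t := by
  apply Finset.sum_nonneg
  intro i _
  rw [ve]
  split
  · exact hv _
  · exact le_refl 0

/-- Step function used in Abel summation. -/
def hGe {n : ℕ} (G : Fin n → ℝ) : ℕ → ℝ := fun t => if t = 0 then 0 else ve G (t - 1)

/-- Abel summation identity. -/
lemma abel_identity {n : ℕ} (v G : Fin n → ℝ) :
    ∑ i : Fin n, v i * G i
      = ∑ t ∈ Finset.range n, (hGe G (t + 1) - hGe G t) * TS v t := by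
  have step1 : ∑ t ∈ Finset.range n, (hGe G (t + 1) - hGe G t) * TS v t
      = ∑ t ∈ Finset.Ico 0 n, ∑ i ∈ Finset.Ico t n, (hGe G (t + 1) - hGe G t) * ve v i := by
    rw [← Finset.range_eq_Ico]
    exact Finset.sum_congr rfl (fun t _ => Finset.mul_sum _ _ _)
  have step2 : ∑ t ∈ Finset.Ico 0 n, ∑ i ∈ Finset.Ico t n, (hGe G (t + 1) - hGe G t) * ve v i
      = ∑ i ∈ Finset.Ico 0 n, ∑ t ∈ Finset.Ico 0 (i + 1), (hGe G (t + 1) - hGe G t) * ve v i :=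
    Finset.sum_Ico_Ico_comm 0 n _
  have step3 : ∀ i, ∑ t ∈ Finset.Ico 0 (i + 1), (hGe G (t + 1) - hGe G t) * ve v i
      = (hGe G (i + 1)) * ve v i := by
    intro i
    rw [← Finset.range_eq_Ico, ← Finset.sum_mul, Finset.sum_range_sub (hGe G)]
    simp [hGe]
  rw [step1, step2]
  rw [Finset.sum_congr rfl (fun i _ => step3 i)]
  rw [← Finset.range_eq_Ico, ← Fin.sum_univ_eq_sum_range (fun i => hGe G (i + 1) * ve v i) n]
  apply Finset.sum_congr rfl
  intro i _
  have h1 : hGe G ((i : ℕ) + 1) = G i := by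
    simp only [hGe, Nat.add_sub_cancel, if_neg (Nat.succ_ne_zero _)]
    simp [ve, i.isLt]
  have h2 : ve v (i : ℕ) = v i := by simp [ve, i.isLt]
  rw [h1, h2, mul_comm]

lemma hGe_succ {n : ℕ} (G : Fin n → ℝ) (t : ℕ) (h : t < n) : hGe G (t + 1) = G ⟨t, h⟩ := by
  simp [hGe, ve, h]

lemma hGe_zero {n : ℕ} (G : Fin n → ℝ) : hGe G 0 = 0 := by simp [hGe]

/-- Abel-summation inequality with equality analysis. -/
lemma abel_ineq {n d : ℕ} {lam : ℝ} {x y : Fin n → ℝ}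
    (hd : 0 < d) (hdn : d < n)
    (hD : ∀ t, t < n → lam * TS y t ≤ TS x t)
    (hDs : ∀ t, t < n → t ≠ d → lam * TS y t < TS x t)
    {G : Fin n → ℝ} (hGmono : Monotone G) (hG0 : ∀ i, 0 ≤ G i) :
    lam * ∑ i, y i * G i ≤ ∑ i, x i * G i ∧
      (lam * ∑ i, y i * G i = ∑ i, x i * G i →
        (∀ i : Fin n, (i : ℕ) < d → G i = 0) ∧
          (∀ i : Fin n, d ≤ (i : ℕ) → G i = G ⟨d, hdn⟩)) := by
  have hΔ : ∀ t, t < n → 0 ≤ hGe G (t + 1) - hGe G t := by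
    intro t ht
    rcases t with _ | t
    · rw [hGe_succ G 0 ht, hGe_zero]
      linarith [hG0 ⟨0, ht⟩]
    · rw [hGe_succ G (t + 1) ht, hGe_succ G t (by omega)]
      have hle : (⟨t, by omega⟩ : Fin n) ≤ ⟨t + 1, ht⟩ := Fin.mk_le_mk.mpr (by omega)
      linarith [hGmono hle]
  have key : ∑ i, x i * G i - lam * ∑ i, y i * G i
      = ∑ t ∈ Finset.range n, (hGe G (t + 1) - hGe G t) * (TS x t - lam * TS y t) := by
    rw [abel_identity x G, abel_identity y G, Finset.mul_sum, ← Finset.sum_sub_distrib]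
    apply Finset.sum_congr rfl
    intro t _
    ring
  have hterm : ∀ t ∈ Finset.range n, 0 ≤ (hGe G (t + 1) - hGe G t) * (TS x t - lam * TS y t) := by
    intro t ht
    rw [Finset.mem_range] at ht
    exact mul_nonneg (hΔ t ht) (by linarith [hD t ht])
  constructor
  · have : 0 ≤ ∑ i, x i * G i - lam * ∑ i, y i * G i := by
      rw [key]; exact Finset.sum_nonneg hterm
    linarith
  · intro heq
    have hzero : ∀ t ∈ Finset.range n, (hGe G (t + 1) - hGe G t) * (TS x t - lam * TS y t) = 0 := by
      rw [← Finset.sum_eq_zero_iff_of_nonneg hterm, ← key]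
      linarith
    have hΔ0 : ∀ t, t < n → t ≠ d → hGe G (t + 1) = hGe G t := by
      intro t ht htd
      have := hzero t (Finset.mem_range.mpr ht)
      have hpos : 0 < TS x t - lam * TS y t := by linarith [hDs t ht htd]
      have := mul_eq_zero.mp this
      rcases this with h | h
      · linarith
      · linarith
    -- values of G below d vanish
    have hbelow : ∀ t (h : t < n), t < d → G ⟨t, h⟩ = 0 := by
      intro t
      induction t with
      | zero =>
        intro h _
        have h0 := hΔ0 0 h (by omega)
        rw [hGe_succ G 0 h, hGe_zero] at h0
        exact h0
      | succ t ih =>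
        intro h htd
        have hprev := ih (by omega) (by omega)
        have h0 := hΔ0 (t + 1) h (by omega)
        rw [hGe_succ G (t + 1) h, hGe_succ G t (by omega)] at h0
        rw [h0, hprev]
    have habove : ∀ t (h : t < n), d ≤ t → G ⟨t, h⟩ = G ⟨d, hdn⟩ := by
      intro t
      induction t with
      | zero => intro h h2; omega
      | succ t ih =>
        intro h htd
        rcases Nat.lt_or_ge t d with h1 | h1
        · have : t + 1 = d := by omega
          subst this
          rfl
        · have hprev := ih (by omega) h1
          have h0 := hΔ0 (t + 1) h (by omega)
          rw [hGe_succ G (t + 1) h, hGe_succ G t (by omega)] at h0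
          rw [h0, hprev]
    exact ⟨fun i hi => by have := hbelow i i.isLt hi; simpa using this,
      fun i hi => by have := habove i i.isLt hi; simpa using this⟩
/-! ### Part C : sums of products over up-closed sets of multi-indices -/

/-- Sum of products of components over a finite set of multi-indices. -/
def Psum {n k : ℕ} (v : Fin n → ℝ) (S : Finset (Fin k → Fin n)) : ℝ :=
  ∑ f ∈ S, ∏ j, v (f j)

/-- A set of multi-indices is up-closed if it is stable under pointwise increase. -/
def UpClosed {n k : ℕ} (S : Finset (Fin k → Fin n)) : Prop :=
  ∀ f ∈ S, ∀ g : Fin k → Fin n, (∀ j, f j ≤ g j) → g ∈ S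

/-- The multi-indices all of whose components are `≥ d`. -/
def Tset (n d k : ℕ) : Finset (Fin k → Fin n) :=
  Finset.univ.filter (fun f => ∀ j, d ≤ (f j : ℕ))

lemma Psum_nonneg {n k : ℕ} {v : Fin n → ℝ} (hv : ∀ i, 0 ≤ v i)
    (S : Finset (Fin k → Fin n)) : 0 ≤ Psum v S :=
  Finset.sum_nonneg fun f _ => Finset.prod_nonneg fun j _ => hv (f j)

lemma Psum_mono {n k : ℕ} {v : Fin n → ℝ} (hv : ∀ i, 0 ≤ v i)
    {S S' : Finset (Fin k → Fin n)} (h : S ⊆ S') : Psum v S ≤ Psum v S' :=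
  Finset.sum_le_sum_of_subset_of_nonneg h
    (fun f _ _ => Finset.prod_nonneg fun j _ => hv (f j))

lemma Psum_pos {n k : ℕ} {v : Fin n → ℝ} (hv : ∀ i, 0 < v i)
    {S : Finset (Fin k → Fin n)} (hS : S.Nonempty) : 0 < Psum v S :=
  Finset.sum_pos (fun f _ => Finset.prod_pos fun j _ => hv (f j)) hS

lemma Psum_eq_zero_iff {n k : ℕ} {v : Fin n → ℝ} (hv : ∀ i, 0 < v i)
    {S : Finset (Fin k → Fin n)} : Psum v S = 0 ↔ S = ∅ := by
  constructor
  · intro h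
    by_contra hne
    have := Psum_pos hv (Finset.nonempty_of_ne_empty hne)
    linarith
  · rintro rfl; simp [Psum]

lemma Psum_subset_eq {n k : ℕ} {v : Fin n → ℝ} (hv : ∀ i, 0 < v i)
    {S S' : Finset (Fin k → Fin n)} (h : S ⊆ S') (heq : Psum v S = Psum v S') :
    S = S' := by
  have h1 : Psum v (S' \ S) = 0 := by
    have := Finset.sum_sdiff_eq_sub (f := fun f => ∏ j, v (f j)) h
    rw [Psum, Psum] at heq
    rw [Psum, this, heq]
    ring
  have h2 : S' \ S = ∅ := (Psum_eq_zero_iff hv).mp h1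
  apply Finset.Subset.antisymm h
  intro f hf
  by_contra hfs
  have : f ∈ S' \ S := Finset.mem_sdiff.mpr ⟨hf, hfs⟩
  rw [h2] at this
  exact absurd this (Finset.notMem_empty f)

lemma Tset_eq_piFinset (n d k : ℕ) :
    Tset n d k = Fintype.piFinset (fun _ : Fin k =>
      Finset.univ.filter (fun i : Fin n => d ≤ (i : ℕ))) := by
  ext f
  simp [Tset, Fintype.mem_piFinset]

lemma card_Tset {n : ℕ} (d k : ℕ) (hdn : d ≤ n) : (Tset n d k).card = (n - d) ^ k := by
  rw [Tset_eq_piFinset, Fintype.card_piFinset]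
  simp [card_filter_le_val hdn]

lemma Psum_Tset {n : ℕ} (v : Fin n → ℝ) (d k : ℕ) :
    Psum v (Tset n d k) = (TS v d) ^ k := by
  rw [Tset_eq_piFinset, Psum]
  rw [← Finset.prod_univ_sum (fun _ : Fin k =>
      Finset.univ.filter (fun i : Fin n => d ≤ (i : ℕ))) (fun _ j => v j)]
  rw [Finset.prod_const, TS_eq_sum_filter]
  simp

/-- Slice of a set of multi-indices along the value of the first coordinate. -/
def slice {n k : ℕ} (S : Finset (Fin (k + 1) → Fin n)) (i : Fin n) :
    Finset (Fin k → Fin n) :=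
  Finset.univ.filter (fun g => Fin.cons i g ∈ S)

lemma Psum_slice {n k : ℕ} (v : Fin n → ℝ) (S : Finset (Fin (k + 1) → Fin n)) :
    Psum v S = ∑ i : Fin n, v i * Psum v (slice S i) := by
  have h1 : Psum v S = ∑ f : Fin (k + 1) → Fin n,
      if f ∈ S then ∏ j, v (f j) else 0 := by
    rw [Psum, Finset.sum_ite_mem, Finset.univ_inter]
  rw [h1, ← Equiv.sum_comp (Fin.consEquiv (fun _ => Fin n))
    (fun f => if f ∈ S then ∏ j, v (f j) else 0), Fintype.sum_prod_type]
  apply Finset.sum_congr rfl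
  intro i _
  rw [Psum, slice, Finset.sum_filter, Finset.mul_sum]
  apply Finset.sum_congr rfl
  intro g _
  have hc : (Fin.consEquiv (fun _ => Fin n)) (i, g) = Fin.cons i g := rfl
  rw [hc]
  by_cases h : Fin.cons i g ∈ S
  · rw [if_pos h, if_pos h, Fin.prod_univ_succ]
    simp
  · rw [if_neg h, if_neg h, mul_zero]

lemma slice_upClosed {n k : ℕ} {S : Finset (Fin (k + 1) → Fin n)} (hS : UpClosed S)
    (i : Fin n) : UpClosed (slice S i) := by
  intro g hg h hgh
  simp only [slice, Finset.mem_filter, Finset.mem_univ, true_and] at hg ⊢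
  refine hS _ hg _ ?_
  intro j
  refine Fin.cases ?_ ?_ j
  · simp
  · intro j'
    simpa using hgh j'

lemma slice_mono {n k : ℕ} {S : Finset (Fin (k + 1) → Fin n)} (hS : UpClosed S)
    {i i' : Fin n} (h : i ≤ i') : slice S i ⊆ slice S i' := by
  intro g hg
  simp only [slice, Finset.mem_filter, Finset.mem_univ, true_and] at hg ⊢
  refine hS _ hg _ ?_
  intro j
  refine Fin.cases ?_ ?_ j
  · simpa using h
  · intro j'; simp

/-- The core inequality over up-closed sets, with equality analysis. -/
lemma core {n d : ℕ} {lam : ℝ} {x y : Fin n → ℝ}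
    (hd : 0 < d) (hdn : d < n) (hlam : 0 < lam)
    (hx0 : ∀ i, 0 ≤ x i) (hy0 : ∀ i, 0 < y i)
    (hD : ∀ t, t < n → lam * TS y t ≤ TS x t)
    (hDs : ∀ t, t < n → t ≠ d → lam * TS y t < TS x t) :
    ∀ (k : ℕ) (S : Finset (Fin k → Fin n)), UpClosed S →
      lam ^ k * Psum y S ≤ Psum x S ∧
        (lam ^ k * Psum y S = Psum x S → S = ∅ ∨ S = Tset n d k) := by
  intro k
  induction k with
  | zero =>
    intro S _
    rcases S.eq_empty_or_nonempty with rfl | ⟨f, hf⟩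
    · simp [Psum]
    · have hSu : S = Finset.univ := by
        apply Finset.eq_univ_iff_forall.mpr
        intro g
        have : g = f := by
          funext j
          exact absurd j.isLt (by omega)
        rw [this]; exact hf
      subst hSu
      have h1 : Psum x (Finset.univ : Finset (Fin 0 → Fin n)) = 1 := by
        rw [Psum]
        simp [Finset.card_univ]
      have h2 : Psum y (Finset.univ : Finset (Fin 0 → Fin n)) = 1 := by
        rw [Psum]
        simp [Finset.card_univ]
      constructor
      · rw [h1, h2, pow_zero, one_mul]
      · intro _
        right
        rw [Tset]
        rw [Finset.filter_true_of_mem]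
        intro f _ j
        exact absurd j.isLt (by omega)
  | succ k ih =>
    intro S hS
    set G : Fin n → ℝ := fun i => Psum y (slice S i) with hG
    have hy0' : ∀ i, 0 ≤ y i := fun i => (hy0 i).le
    have hGmono : Monotone G := by
      intro i i' h
      exact Psum_mono hy0' (slice_mono hS h)
    have hG0 : ∀ i, 0 ≤ G i := fun i => Psum_nonneg hy0' _
    have hIH : ∀ i, lam ^ k * G i ≤ Psum x (slice S i) ∧
        (lam ^ k * G i = Psum x (slice S i) → slice S i = ∅ ∨ slice S i = Tset n d k) :=
      fun i => ih (slice S i) (slice_upClosed hS i)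
    have habel := abel_ineq hd hdn hD hDs hGmono hG0
    have hchain1 : ∑ i : Fin n, x i * (lam ^ k * G i) ≤ ∑ i : Fin n, x i * Psum x (slice S i) :=
      Finset.sum_le_sum fun i _ => mul_le_mul_of_nonneg_left (hIH i).1 (hx0 i)
    have hchain2 : lam ^ (k + 1) * Psum y S ≤ lam ^ k * ∑ i : Fin n, x i * G i := by
      have h1 : lam * ∑ i : Fin n, y i * G i ≤ ∑ i : Fin n, x i * G i := habel.1
      have h2 : Psum y S = ∑ i : Fin n, y i * G i := Psum_slice y S
      calc lam ^ (k + 1) * Psum y S = lam ^ k * (lam * ∑ i : Fin n, y i * G i) := by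
            rw [h2]; ring
      _ ≤ lam ^ k * ∑ i : Fin n, x i * G i :=
            mul_le_mul_of_nonneg_left h1 (pow_nonneg hlam.le k)
    have hxS : Psum x S = ∑ i : Fin n, x i * Psum x (slice S i) := Psum_slice x S
    have hmid : lam ^ k * ∑ i : Fin n, x i * G i = ∑ i : Fin n, x i * (lam ^ k * G i) := by
      rw [Finset.mul_sum]
      apply Finset.sum_congr rfl
      intro i _
      ring
    constructor
    · rw [hxS]
      calc lam ^ (k + 1) * Psum y S ≤ lam ^ k * ∑ i : Fin n, x i * G i := hchain2
      _ = ∑ i : Fin n, x i * (lam ^ k * G i) := hmid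
      _ ≤ ∑ i : Fin n, x i * Psum x (slice S i) := hchain1
    · intro heq
      -- both inequalities are equalities
      have heq1 : ∑ i : Fin n, x i * (lam ^ k * G i) = ∑ i : Fin n, x i * Psum x (slice S i) := by
        apply le_antisymm hchain1
        rw [← hxS, ← heq, ← hmid]
        exact hchain2
      have heq2 : lam * ∑ i : Fin n, y i * G i = ∑ i : Fin n, x i * G i := by
        apply le_antisymm habel.1
        by_contra hlt
        push_neg at hlt
        have : lam ^ k * (lam * ∑ i : Fin n, y i * G i) < lam ^ k * ∑ i : Fin n, x i * G i :=
          (mul_lt_mul_iff_right₀ (pow_pos hlam k)).mpr hlt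
        have hfin : lam ^ (k + 1) * Psum y S < Psum x S := by
          calc lam ^ (k + 1) * Psum y S = lam ^ k * (lam * ∑ i : Fin n, y i * G i) := by
                rw [Psum_slice y S]; ring
          _ < lam ^ k * ∑ i : Fin n, x i * G i := this
          _ = ∑ i : Fin n, x i * (lam ^ k * G i) := hmid
          _ ≤ ∑ i : Fin n, x i * Psum x (slice S i) := hchain1
          _ = Psum x S := hxS.symm
        linarith [heq]
      -- termwise equality in heq1
      have hterm : ∀ i : Fin n, x i * (lam ^ k * G i) = x i * Psum x (slice S i) :=
        fun i => (Finset.sum_eq_sum_iff_of_le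
          (fun i _ => mul_le_mul_of_nonneg_left (hIH i).1 (hx0 i))).mp heq1 i (Finset.mem_univ i)
      -- structure of G from the abel equality
      obtain ⟨hGbelow, hGconst⟩ := habel.2 heq2
      -- slices below d are empty
      have hempty : ∀ i : Fin n, (i : ℕ) < d → slice S i = ∅ := by
        intro i hi
        exact (Psum_eq_zero_iff hy0).mp (hGbelow i hi)
      -- slices above d are all equal to the slice at d
      have hconst : ∀ i : Fin n, d ≤ (i : ℕ) → slice S i = slice S ⟨d, hdn⟩ := by
        intro i hi
        have hsub : slice S ⟨d, hdn⟩ ⊆ slice S i := slice_mono hS (by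
          rw [Fin.le_def]; exact hi)
        have : Psum y (slice S ⟨d, hdn⟩) = Psum y (slice S i) := by
          have := hGconst i hi
          simpa [hG] using this.symm
        exact (Psum_subset_eq hy0 hsub this).symm
      -- find i0 ≥ d with x i0 > 0
      have hTSy : 0 < TS y d := by
        rw [TS_eq_sum_filter]
        apply Finset.sum_pos (fun i _ => hy0 i)
        exact ⟨⟨d, hdn⟩, by simp⟩
      have hTSx : 0 < TS x d := lt_of_lt_of_le (by positivity) (hD d hdn)
      have hex : ∃ i : Fin n, d ≤ (i : ℕ) ∧ 0 < x i := by
        by_contra hno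
        push_neg at hno
        have : TS x d = 0 := by
          rw [TS_eq_sum_filter]
          apply Finset.sum_eq_zero
          intro i hi
          simp only [Finset.mem_filter, Finset.mem_univ, true_and] at hi
          exact le_antisymm (hno i hi) (hx0 i)
        linarith
      obtain ⟨i0, hi0d, hi0pos⟩ := hex
      have hsliceeq : lam ^ k * G i0 = Psum x (slice S i0) :=
        mul_left_cancel₀ (ne_of_gt hi0pos) (hterm i0)
      have := (hIH i0).2 hsliceeq
      rcases this with hR | hR
      · -- all slices empty, S = ∅
        left
        rw [hconst i0 hi0d] at hR
        apply Finset.eq_empty_of_forall_notMem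
        intro f hf
        have hmem : Fin.tail f ∈ slice S (f 0) := by
          simp only [slice, Finset.mem_filter, Finset.mem_univ, true_and]
          rw [Fin.cons_self_tail]
          exact hf
        rcases Nat.lt_or_ge ((f 0 : ℕ)) d with h | h
        · rw [hempty (f 0) h] at hmem
          exact absurd hmem (Finset.notMem_empty _)
        · rw [hconst (f 0) h, hR] at hmem
          exact absurd hmem (Finset.notMem_empty _)
      · -- S = Tset n d (k+1)
        right
        rw [hconst i0 hi0d] at hR
        ext f
        simp only [Tset, Finset.mem_filter, Finset.mem_univ, true_and]
        constructor
        · intro hf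
          have hmem : Fin.tail f ∈ slice S (f 0) := by
            simp only [slice, Finset.mem_filter, Finset.mem_univ, true_and]
            rw [Fin.cons_self_tail]
            exact hf
          have hf0 : d ≤ ((f 0 : ℕ)) := by
            by_contra h
            push_neg at h
            rw [hempty (f 0) h] at hmem
            exact absurd hmem (Finset.notMem_empty _)
          rw [hconst (f 0) hf0, hR] at hmem
          simp only [Tset, Finset.mem_filter, Finset.mem_univ, true_and] at hmem
          intro j
          refine Fin.cases ?_ ?_ j
          · exact hf0
          · intro j'
            exact hmem j'
        · intro hf
          have htail : Fin.tail f ∈ Tset n d k := by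
            simp only [Tset, Finset.mem_filter, Finset.mem_univ, true_and]
            intro j'
            exact hf j'.succ
          rw [← hR, ← hconst (f 0) (hf 0)] at htail
          simp only [slice, Finset.mem_filter, Finset.mem_univ, true_and] at htail
          rw [Fin.cons_self_tail] at htail
          exact htail
/-! ### Part D : transport to `tpow`, up-closed replacement, main theorem -/

lemma tpow_apply {n k : ℕ} (v : Fin n → ℝ) (f : Fin k → Fin n) :
    tpow v k (finFunctionFinEquiv f) = ∏ j, v (f j) := by
  simp [tpow]

lemma ESum_tpow_le {n k : ℕ} (v : Fin n → ℝ) (S : Finset (Fin k → Fin n)) :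
    ESum (tpow v k) S.card ≤ Psum v S := by
  have hinj : Function.Injective (finFunctionFinEquiv : (Fin k → Fin n) ≃ Fin (n ^ k)) :=
    Equiv.injective _
  have hcard : (S.image (finFunctionFinEquiv : (Fin k → Fin n) ≃ Fin (n ^ k))).card = S.card :=
    Finset.card_image_of_injective S hinj
  have := ESum_le_sum (tpow v k) (S.image finFunctionFinEquiv) hcard
  rwa [Finset.sum_image (fun a _ b _ h => hinj h),
    Finset.sum_congr rfl (fun f _ => tpow_apply v f)] at this

lemma exists_ESum_tpow {n k : ℕ} (v : Fin n → ℝ) {l : ℕ} (hl : l ≤ n ^ k) :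
    ∃ S : Finset (Fin k → Fin n), S.card = l ∧ ESum (tpow v k) l = Psum v S := by
  obtain ⟨s, hs, heq⟩ := exists_ESum_eq (tpow v k) (l := l) (by simpa using hl)
  have hinj : Function.Injective (finFunctionFinEquiv.symm : Fin (n ^ k) ≃ (Fin k → Fin n)) :=
    Equiv.injective _
  refine ⟨s.image finFunctionFinEquiv.symm, ?_, ?_⟩
  · rw [Finset.card_image_of_injective s hinj, hs]
  · rw [heq, Psum, Finset.sum_image (fun a _ b _ h => hinj h)]
    apply Finset.sum_congr rfl
    intro g _
    rfl

/-- Potential function used for the up-closed replacement argument. -/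
def Npot {n k : ℕ} (S : Finset (Fin k → Fin n)) : ℕ := ∑ f ∈ S, ∑ j, (f j : ℕ)

lemma Npot_le {n k : ℕ} (S : Finset (Fin k → Fin n)) :
    Npot S ≤ Fintype.card (Fin k → Fin n) * (k * n) := by
  calc Npot S ≤ ∑ f ∈ S, k * n := by
        apply Finset.sum_le_sum
        intro f _
        calc ∑ j, ((f j : ℕ)) ≤ ∑ _j : Fin k, n := Finset.sum_le_sum (fun j _ => (f j).isLt.le)
        _ = k * n := by simp [Finset.sum_const, Finset.card_univ, Nat.smul_one_eq_cast]
  _ = S.card * (k * n) := by rw [Finset.sum_const, smul_eq_mul]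
  _ ≤ Fintype.card (Fin k → Fin n) * (k * n) :=
        Nat.mul_le_mul_right _ (Finset.card_le_univ S)

lemma swap_step {n k : ℕ} {x : Fin n → ℝ} (hx0 : ∀ i, 0 ≤ x i) (hxa : Antitone x)
    {S : Finset (Fin k → Fin n)} (hS : ¬ UpClosed S) :
    ∃ S1 : Finset (Fin k → Fin n), S1.card = S.card ∧ Psum x S1 ≤ Psum x S ∧
      Npot S < Npot S1 := by
  rw [UpClosed] at hS
  push_neg at hS
  obtain ⟨f, hf, g, hfg, hg⟩ := hS
  have hfne : f ≠ g := fun h => hg (h ▸ hf)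
  refine ⟨insert g (S.erase f), ?_, ?_, ?_⟩
  · rw [Finset.card_insert_of_notMem (fun h => hg (Finset.mem_of_mem_erase h)),
      Finset.card_erase_of_mem hf]
    have : 0 < S.card := Finset.card_pos.mpr ⟨f, hf⟩
    omega
  · rw [Psum, Finset.sum_insert (fun h => hg (Finset.mem_of_mem_erase h))]
    have h1 : ∑ h ∈ S.erase f, ∏ j, x (h j) = (∑ h ∈ S, ∏ j, x (h j)) - ∏ j, x (f j) := by
      rw [← Finset.sum_erase_add S _ hf]
      ring
    rw [h1]
    have h2 : ∏ j, x (g j) ≤ ∏ j, x (f j) :=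
      Finset.prod_le_prod (fun j _ => hx0 (g j)) (fun j _ => hxa (hfg j))
    rw [Psum]
    linarith
  · have hlt : ∑ j, ((f j : ℕ)) < ∑ j, ((g j : ℕ)) := by
      have hex : ∃ j, f j < g j := by
        by_contra hall
        push_neg at hall
        exact hfne (funext fun j => le_antisymm (hfg j) (hall j))
      obtain ⟨j1, hj1⟩ := hex
      exact Finset.sum_lt_sum (fun j _ => Fin.le_def.mp (hfg j))
        ⟨j1, Finset.mem_univ j1, Fin.lt_def.mp hj1⟩
    have h1 : ∑ h ∈ S.erase f, ∑ j, ((h j : ℕ)) + ∑ j, ((f j : ℕ)) = Npot S :=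
      Finset.sum_erase_add S _ hf
    have h2 : Npot (insert g (S.erase f))
        = (∑ h ∈ S.erase f, ∑ j, ((h j : ℕ))) + ∑ j, ((g j : ℕ)) := by
      rw [Nat.add_comm]
      exact Finset.sum_insert (fun h => hg (Finset.mem_of_mem_erase h))
    rw [← h1, h2]
    exact Nat.add_lt_add_left hlt _

lemma exists_upClosed_le {n k : ℕ} {x : Fin n → ℝ} (hx0 : ∀ i, 0 ≤ x i) (hxa : Antitone x)
    (S : Finset (Fin k → Fin n)) :
    ∃ S' : Finset (Fin k → Fin n), S'.card = S.card ∧ UpClosed S' ∧ Psum x S' ≤ Psum x S := by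
  suffices h : ∀ (t : ℕ) (S : Finset (Fin k → Fin n)),
      Fintype.card (Fin k → Fin n) * (k * n) ≤ Npot S + t →
      ∃ S' : Finset (Fin k → Fin n), S'.card = S.card ∧ UpClosed S' ∧ Psum x S' ≤ Psum x S by
    exact h (Fintype.card (Fin k → Fin n) * (k * n)) S (by omega)
  intro t
  induction t with
  | zero =>
    intro S hB
    by_cases hup : UpClosed S
    · exact ⟨S, rfl, hup, le_refl _⟩
    · obtain ⟨S1, _, _, hN⟩ := swap_step hx0 hxa hup
      have := Npot_le S1
      omega
  | succ t ih =>
    intro S hB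
    by_cases hup : UpClosed S
    · exact ⟨S, rfl, hup, le_refl _⟩
    · obtain ⟨S1, hc, hp, hN⟩ := swap_step hx0 hxa hup
      obtain ⟨S', hc', hup', hp'⟩ := ih S1 (by omega)
      exact ⟨S', by rw [hc', hc], hup', le_trans hp' hp⟩

/-- Bounds on products of components over multi-indices inside / outside `Tset`. -/
lemma prod_le_of_mem_Tset {n : ℕ} {y : Fin n → ℝ} (hy0 : ∀ i, 0 < y i) (hya : Antitone y)
    {d k : ℕ} (hdn : d < n) {f : Fin k → Fin n} (hf : f ∈ Tset n d k) :
    ∏ j, y (f j) ≤ y ⟨d, hdn⟩ ^ k := by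
  have h : ∀ j : Fin k, y (f j) ≤ y ⟨d, hdn⟩ := by
    intro j
    apply hya
    rw [Fin.le_def]
    simp only [Tset, Finset.mem_filter, Finset.mem_univ, true_and] at hf
    exact hf j
  calc ∏ j, y (f j) ≤ ∏ _j : Fin k, y ⟨d, hdn⟩ :=
        Finset.prod_le_prod (fun j _ => (hy0 (f j)).le) (fun j _ => h j)
  _ = y ⟨d, hdn⟩ ^ k := by rw [Finset.prod_const]; simp

lemma prod_ge_of_not_mem_Tset {n : ℕ} {y : Fin n → ℝ} (hy0 : ∀ i, 0 < y i) (hya : Antitone y)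
    {d m : ℕ} (hd : 0 < d) (hdn : d < n) {f : Fin (m + 1) → Fin n} (hf : f ∉ Tset n d (m + 1)) :
    y ⟨n - 1, by omega⟩ ^ m * y ⟨d - 1, by omega⟩ ≤ ∏ j, y (f j) := by
  simp only [Tset, Finset.mem_filter, Finset.mem_univ, true_and, not_forall, not_le] at hf
  obtain ⟨j0, hj0⟩ := hf
  rw [← Finset.mul_prod_erase Finset.univ (fun j => y (f j)) (Finset.mem_univ j0)]
  have h1 : y ⟨d - 1, by omega⟩ ≤ y (f j0) := by
    apply hya
    rw [Fin.le_def]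
    simp only [Fin.val_mk]
    omega
  have h2 : y ⟨n - 1, by omega⟩ ^ m ≤ ∏ j ∈ Finset.univ.erase j0, y (f j) := by
    have hcard : (Finset.univ.erase j0).card = m := by
      rw [Finset.card_erase_of_mem (Finset.mem_univ j0), Finset.card_univ]
      simp
    calc y ⟨n - 1, by omega⟩ ^ m = ∏ _j ∈ Finset.univ.erase j0, y ⟨n - 1, by omega⟩ := by
          rw [Finset.prod_const, hcard]
    _ ≤ ∏ j ∈ Finset.univ.erase j0, y (f j) := by
          apply Finset.prod_le_prod (fun j _ => (hy0 _).le)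
          intro j _
          apply hya
          rw [Fin.le_def]
          simp only [Fin.val_mk]
          have := (f j).isLt
          omega
  calc y ⟨n - 1, by omega⟩ ^ m * y ⟨d - 1, by omega⟩
      ≤ (∏ j ∈ Finset.univ.erase j0, y (f j)) * y (f j0) := by
        apply mul_le_mul h2 h1 (hy0 _).le
        exact Finset.prod_nonneg (fun j _ => (hy0 _).le)
  _ = y (f j0) * ∏ j ∈ Finset.univ.erase j0, y (f j) := by ring
/-- When `y_{d}^{m+1} ≤ y_{n-1}^m y_{d-1}` (0-based), `Tset` is a minimizing set for
`y^{⊗(m+1)}` among sets of its cardinality. -/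
lemma Psum_Tset_min {n d m : ℕ} {y : Fin n → ℝ} (hy0 : ∀ i, 0 < y i) (hya : Antitone y)
    (hd : 0 < d) (hdn : d < n)
    (hcond : y ⟨d, hdn⟩ ^ (m + 1) ≤ y ⟨n - 1, by omega⟩ ^ m * y ⟨d - 1, by omega⟩)
    (S : Finset (Fin (m + 1) → Fin n)) (hcard : S.card = (Tset n d (m + 1)).card) :
    Psum y (Tset n d (m + 1)) ≤ Psum y S := by
  set T := Tset n d (m + 1) with hT
  have hsplitS : Psum y (S ∩ T) + Psum y (S \ T) = Psum y S :=
    Finset.sum_inter_add_sum_sdiff S T _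
  have hsplitT : Psum y (T ∩ S) + Psum y (T \ S) = Psum y T :=
    Finset.sum_inter_add_sum_sdiff T S _
  have hSTcard : (S \ T).card = (T \ S).card := by
    have h1 := Finset.card_inter_add_card_sdiff S T
    have h2 := Finset.card_inter_add_card_sdiff T S
    rw [Finset.inter_comm] at h2
    omega
  set M0 : ℝ := y ⟨d, hdn⟩ ^ (m + 1) with hM0
  have hTbound : Psum y (T \ S) ≤ ((T \ S).card : ℝ) * M0 := by
    have := Finset.sum_le_card_nsmul (T \ S) (fun f => ∏ j, y (f j)) M0
      (fun f hf => prod_le_of_mem_Tset hy0 hya hdn (Finset.mem_sdiff.mp hf).1)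
    rwa [nsmul_eq_mul] at this
  have hSbound : ((S \ T).card : ℝ) * M0 ≤ Psum y (S \ T) := by
    have hlow : ∀ f ∈ S \ T, M0 ≤ ∏ j, y (f j) := by
      intro f hf
      have hfn : f ∉ T := (Finset.mem_sdiff.mp hf).2
      calc M0 ≤ y ⟨n - 1, by omega⟩ ^ m * y ⟨d - 1, by omega⟩ := hcond
      _ ≤ ∏ j, y (f j) := prod_ge_of_not_mem_Tset hy0 hya hd hdn hfn
    have := Finset.card_nsmul_le_sum (S \ T) (fun f => ∏ j, y (f j)) M0 hlow
    rwa [nsmul_eq_mul] at this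
  have hIC : Psum y (T ∩ S) = Psum y (S ∩ T) := by rw [Finset.inter_comm]
  have hcast : ((S \ T).card : ℝ) * M0 = ((T \ S).card : ℝ) * M0 := by rw [hSTcard]
  linarith
/-- Under the strict condition, `Tset` is *not* minimizing: the smallest
`(n-d)^(m+1)` entries of `y^{⊗(m+1)}` sum to strictly less. -/
lemma ESum_lt_Psum_Tset {n d m : ℕ} {y : Fin n → ℝ} (hy0 : ∀ i, 0 < y i)
    (hd : 0 < d) (hdn : d < n)
    (hcond : y ⟨n - 1, by omega⟩ ^ m * y ⟨d - 1, by omega⟩ < y ⟨d, hdn⟩ ^ (m + 1)) :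
    ESum (tpow y (m + 1)) (Tset n d (m + 1)).card < Psum y (Tset n d (m + 1)) := by
  set g0 : Fin (m + 1) → Fin n := fun _ => ⟨d, hdn⟩ with hg0def
  set f0 : Fin (m + 1) → Fin n :=
    Fin.cons ⟨d - 1, by omega⟩ (fun _ => ⟨n - 1, by omega⟩) with hf0def
  have hg0 : g0 ∈ Tset n d (m + 1) := by
    simp only [Tset, Finset.mem_filter, Finset.mem_univ, true_and]
    intro j
    simp [hg0def]
  have hf0 : f0 ∉ Tset n d (m + 1) := by
    simp only [Tset, Finset.mem_filter, Finset.mem_univ, true_and]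
    intro h
    have := h 0
    rw [hf0def] at this
    simp only [Fin.cons_zero] at this
    omega
  have hf0e : f0 ∉ (Tset n d (m + 1)).erase g0 :=
    fun h => hf0 (Finset.mem_of_mem_erase h)
  set S2 := insert f0 ((Tset n d (m + 1)).erase g0) with hS2
  have hcardS2 : S2.card = (Tset n d (m + 1)).card := by
    rw [hS2, Finset.card_insert_of_notMem hf0e, Finset.card_erase_of_mem hg0]
    have : 0 < (Tset n d (m + 1)).card := Finset.card_pos.mpr ⟨g0, hg0⟩
    omega
  have hvg : ∏ j, y (g0 j) = y ⟨d, hdn⟩ ^ (m + 1) := by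
    rw [hg0def, Finset.prod_const]
    simp
  have hvf : ∏ j, y (f0 j) = y ⟨d - 1, by omega⟩ * y ⟨n - 1, by omega⟩ ^ m := by
    rw [hf0def, Fin.prod_univ_succ]
    simp only [Fin.cons_zero, Fin.cons_succ, Finset.prod_const]
    simp
  have hPsum2 : Psum y S2 = (∏ j, y (f0 j)) + (Psum y (Tset n d (m + 1)) - ∏ j, y (g0 j)) := by
    rw [hS2, Psum, Finset.sum_insert hf0e]
    have := Finset.sum_erase_add (Tset n d (m + 1)) (fun f => ∏ j, y (f j)) hg0
    rw [Psum]
    have h2 : ∑ f ∈ (Tset n d (m + 1)).erase g0, ∏ j, y (f j)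
        = (∑ f ∈ Tset n d (m + 1), ∏ j, y (f j)) - ∏ j, y (g0 j) := by
      rw [← this]; ring
    rw [h2]
  have hE := ESum_tpow_le y S2
  rw [hcardS2] at hE
  calc ESum (tpow y (m + 1)) (Tset n d (m + 1)).card ≤ Psum y S2 := hE
  _ < Psum y (Tset n d (m + 1)) := by
      rw [hPsum2, hvf, hvg]
      have : y ⟨d - 1, by omega⟩ * y ⟨n - 1, by omega⟩ ^ m
          = y ⟨n - 1, by omega⟩ ^ m * y ⟨d - 1, by omega⟩ := by ring
      rw [this]
      linarith
end Stmt19Aux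

open Stmt19Aux in
/-- Lemma 16 of the paper. For `x ∈ K_d^λ(y)`:
`x^{⊗k} ◁ʷ λ^k y^{⊗k}` iff `y_{d+1}^k > y_n^{k-1} y_d` (1-based indices in
the informal statement, 0-based here). -/
theorem stmt19 {n : ℕ} (d k : ℕ) (hd1 : 0 < d) (hd2 : d + 1 < n) (hk : 1 ≤ k)
    (lam : ℝ) (hlam : 0 < lam ∧ lam < 1)
    (y : Fin n → ℝ) (hy : y ∈ Vn n) (hypos : ∀ i, 0 < y i) :
    ∀ x ∈ Kdlam lam y d,
      (SSupMaj (tpow x k) (fun i => lam ^ k * tpow y k i) ↔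
        y ⟨d, by omega⟩ ^ k > y ⟨n - 1, by omega⟩ ^ (k - 1) * y ⟨d - 1, by omega⟩) := by
  obtain ⟨hlam0, hlam1⟩ := hlam
  obtain ⟨hy0', hysum, hya⟩ := hy
  intro x hx
  obtain ⟨hxV, hxsup, hxiff⟩ := hx
  obtain ⟨hx0, hxsum, hxa⟩ := hxV
  obtain ⟨m, rfl⟩ : ∃ m, k = m + 1 := ⟨k - 1, by omega⟩
  simp only [Nat.add_sub_cancel]
  have hdn : d < n := by omega
  have hn : 0 < n := by omega
  -- tail-sum inequalities
  have hD : ∀ t, t < n → lam * TS y t ≤ TS x t := by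
    intro t ht
    have h1 : 1 ≤ n - t := by omega
    have h2 : n - t ≤ n := by omega
    have h3 := hxsup (n - t) h1 h2
    rw [ESum_smul y h2 hlam0.le, ESum_eq_TS hxa ht.le, ESum_eq_TS hya ht.le] at h3
    exact h3
  have hIff : ∀ t, t < n → (TS x t = lam * TS y t ↔ t = d) := by
    intro t ht
    have h1 : 1 ≤ n - t := by omega
    have h2 : n - t ≤ n := by omega
    have h3 := hxiff (n - t) h1 h2
    rw [ESum_eq_TS hxa ht.le, ESum_eq_TS hya ht.le] at h3
    constructor
    · intro h
      have := h3.mp h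
      omega
    · intro h
      exact h3.mpr (by omega)
  have hDs : ∀ t, t < n → t ≠ d → lam * TS y t < TS x t := by
    intro t ht htd
    rcases lt_or_eq_of_le (hD t ht) with h | h
    · exact h
    · exact absurd ((hIff t ht).mp h.symm) htd
  have hTxd : TS x d = lam * TS y d := (hIff d hdn).mpr rfl
  have hTSyd : 0 < TS y d := by
    rw [TS_eq_sum_filter]
    exact Finset.sum_pos (fun i _ => hypos i) ⟨⟨d, hdn⟩, by simp⟩
  have hcore := core hd1 hdn hlam0 hx0 hypos hD hDs (m + 1)
  have hcardT : (Tset n d (m + 1)).card = (n - d) ^ (m + 1) := card_Tset d (m + 1) (by omega)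
  have hL1 : 1 ≤ (n - d) ^ (m + 1) := Nat.one_le_pow _ _ (by omega)
  have hLn : (n - d) ^ (m + 1) ≤ n ^ (m + 1) := Nat.pow_le_pow_left (by omega) _
  have hPTx : Psum x (Tset n d (m + 1)) = TS x d ^ (m + 1) := Psum_Tset x d (m + 1)
  have hPTy : Psum y (Tset n d (m + 1)) = TS y d ^ (m + 1) := Psum_Tset y d (m + 1)
  have hlamk : (0 : ℝ) < lam ^ (m + 1) := pow_pos hlam0 _
  constructor
  · -- strict supermajorization implies the condition, by contradiction
    intro hss
    by_contra hcond
    push_neg at hcond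
    have hcond' : y ⟨d, hdn⟩ ^ (m + 1)
        ≤ y ⟨n - 1, by omega⟩ ^ m * y ⟨d - 1, by omega⟩ := hcond
    set l := (n - d) ^ (m + 1) with hl
    have hss' := hss l hL1 (by simpa using hLn)
    rw [ESum_smul (tpow y (m + 1)) (by simpa using hLn) hlamk.le] at hss'
    -- upper bound for x
    have hEx : ESum (tpow x (m + 1)) l ≤ lam ^ (m + 1) * TS y d ^ (m + 1) := by
      have h1 := ESum_tpow_le x (Tset n d (m + 1))
      rw [hcardT, hPTx, hTxd, mul_pow] at h1
      exact h1
    -- lower bound for y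
    have hEy : TS y d ^ (m + 1) ≤ ESum (tpow y (m + 1)) l := by
      obtain ⟨S0, hS0c, hS0e⟩ := exists_ESum_tpow y (by simpa using hLn : l ≤ n ^ (m + 1))
      rw [hS0e, ← hPTy]
      exact Psum_Tset_min hypos hya hd1 hdn hcond' S0 (by rw [hS0c, hcardT])
    have : lam ^ (m + 1) * ESum (tpow y (m + 1)) l ≥ lam ^ (m + 1) * TS y d ^ (m + 1) :=
      mul_le_mul_of_nonneg_left hEy hlamk.le
    linarith
  · -- the condition implies strict supermajorization
    intro hcond
    have hcond' : y ⟨n - 1, by omega⟩ ^ m * y ⟨d - 1, by omega⟩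
        < y ⟨d, hdn⟩ ^ (m + 1) := hcond
    intro l hl1 hln
    rw [ESum_smul (tpow y (m + 1)) (by simpa using hln) hlamk.le]
    obtain ⟨S0, hS0c, hS0e⟩ := exists_ESum_tpow x (show l ≤ n ^ (m + 1) by simpa using hln)
    obtain ⟨S1, hS1c, hS1up, hS1le⟩ := exists_upClosed_le hx0 hxa S0
    have hS1card : S1.card = l := by rw [hS1c, hS0c]
    obtain ⟨hc1, hc2⟩ := hcore S1 hS1up
    have hEy1 : ESum (tpow y (m + 1)) l ≤ Psum y S1 := by
      have := ESum_tpow_le y S1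
      rwa [hS1card] at this
    by_contra hno
    push_neg at hno
    -- all inequalities in the chain collapse to equalities
    have hch1 : lam ^ (m + 1) * ESum (tpow y (m + 1)) l ≤ lam ^ (m + 1) * Psum y S1 :=
      mul_le_mul_of_nonneg_left hEy1 hlamk.le
    have hch3 : Psum x S1 ≤ ESum (tpow x (m + 1)) l := by rw [hS0e]; exact hS1le
    have heqc : lam ^ (m + 1) * Psum y S1 = Psum x S1 := by linarith
    have heqy : lam ^ (m + 1) * ESum (tpow y (m + 1)) l = lam ^ (m + 1) * Psum y S1 := by
      linarith
    have heqy' : ESum (tpow y (m + 1)) l = Psum y S1 :=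
      mul_left_cancel₀ (ne_of_gt hlamk) heqy
    rcases hc2 heqc with hS1e | hS1T
    · -- S1 cannot be empty
      have : 0 < S1.card := by omega
      rw [hS1e] at this
      simp at this
    · -- S1 = Tset, contradicting strict minimality
      have hlT : l = (Tset n d (m + 1)).card := by rw [← hS1card, hS1T]
      have hstrict := ESum_lt_Psum_Tset hypos hd1 hdn hcond'
      rw [← hlT, ← hS1T] at hstrict
      rw [heqy'] at hstrict
      exact lt_irrefl _ hstrict

end
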